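/- Let B → K and C → K be ring homomorphisms with C → K surjective and A = B ×_K C with conductor I = Ker(A → B). Then Spec(A) is set-theoretically the disjoint union of the closed set V(I) and the open set Spec(A) \ V(I), and the map Spec(C) → Spec(A) induced by the projection A → C restricts to a bijection (indeed homeomorphism) from Spec(C) \ V(IC) onto Spec(A) \ V(I). -/
import Mathlib


/-- For a Ferrand fiber product `A = B ×_K C` with conductor `I`:
`Spec A` is the disjoint union of the closed set `V(I)` and the open set
`Spec A \ V(I)`, and `Spec C → Spec A` restricts to a bijection
`Spec C \ V(IC) → Spec A \ V(I)`. -/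
theorem ferrand_spec_decomposition
    (A B C K : Type*) [CommRing A] [CommRing B] [CommRing C] [CommRing K]
    [Algebra A B] [Algebra A C] [Algebra A K] [Algebra B K] [Algebra C K]
    [IsScalarTower A B K] [IsScalarTower A C K]
    (hsurj : Function.Surjective (algebraMap C K))
    (hpull : ∀ (b : B) (c : C), algebraMap B K b = algebraMap C K c →
      ∃! a : A, algebraMap A B a = b ∧ algebraMap A C a = c) :
    IsClosed (PrimeSpectrum.zeroLocus
        ((RingHom.ker (algebraMap A B) : Ideal A) : Set A)) ∧
      IsOpen (PrimeSpectrum.zeroLocus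
        ((RingHom.ker (algebraMap A B) : Ideal A) : Set A))ᶜ ∧
      Set.BijOn (PrimeSpectrum.comap (algebraMap A C))
        (PrimeSpectrum.zeroLocus
          ((Ideal.map (algebraMap A C) (RingHom.ker (algebraMap A B)) : Ideal C) : Set C))ᶜ
        (PrimeSpectrum.zeroLocus
          ((RingHom.ker (algebraMap A B) : Ideal A) : Set A))ᶜ := by
  set f := algebraMap A C with hf
  set g := algebraMap A B with hg
  -- elements of A are determined by their images in B and C
  have hinj : ∀ a₁ a₂ : A, g a₁ = g a₂ → f a₁ = f a₂ → a₁ = a₂ := by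
    intro a₁ a₂ hb hc
    have hcompat : algebraMap B K (g a₁) = algebraMap C K (f a₁) := by
      rw [hf, hg, ← IsScalarTower.algebraMap_apply, ← IsScalarTower.algebraMap_apply]
    obtain ⟨a, -, huniq⟩ := hpull (g a₁) (f a₁) hcompat
    rw [huniq a₁ ⟨rfl, rfl⟩, huniq a₂ ⟨hb.symm, hc.symm⟩]
  -- lifting elements of ker (C → K)
  have hlift : ∀ c : C, algebraMap C K c = 0 → ∃ a : A, g a = 0 ∧ f a = c := by
    intro c hc
    obtain ⟨a, ⟨h1, h2⟩, -⟩ := hpull 0 c (by rw [map_zero, hc])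
    exact ⟨a, h1, h2⟩
  -- elements of the conductor map to ker (C → K)
  have hker : ∀ a : A, g a = 0 → algebraMap C K (f a) = 0 := by
    intro a ha
    rw [hf, ← IsScalarTower.algebraMap_apply, IsScalarTower.algebraMap_apply A B K, ← hg, ha,
      map_zero]
  -- the image of the conductor
  have hmap : Ideal.map f (RingHom.ker g) = RingHom.ker (algebraMap C K) := by
    apply le_antisymm
    · rw [Ideal.map_le_iff_le_comap]
      intro a ha
      exact hker a ha
    · intro c hc
      obtain ⟨a, h1, h2⟩ := hlift c hc
      exact h2 ▸ Ideal.mem_map_of_mem f h1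
  have hmemA : ∀ x : PrimeSpectrum A,
      x ∈ (PrimeSpectrum.zeroLocus ((RingHom.ker g : Ideal A) : Set A))ᶜ ↔
        ¬ RingHom.ker g ≤ x.asIdeal := by
    intro x
    simp [PrimeSpectrum.mem_zeroLocus, SetLike.coe_subset_coe]
  have hmemC : ∀ y : PrimeSpectrum C,
      y ∈ (PrimeSpectrum.zeroLocus ((Ideal.map f (RingHom.ker g) : Ideal C) : Set C))ᶜ ↔
        ¬ RingHom.ker (algebraMap C K) ≤ y.asIdeal := by
    intro y
    rw [hmap]
    simp [PrimeSpectrum.mem_zeroLocus, SetLike.coe_subset_coe]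
  refine ⟨PrimeSpectrum.isClosed_zeroLocus _,
    (PrimeSpectrum.isClosed_zeroLocus _).isOpen_compl, ?_, ?_, ?_⟩
  · -- MapsTo
    intro y hy
    rw [hmemC] at hy
    rw [hmemA]
    intro hle
    apply hy
    rw [← hmap, Ideal.map_le_iff_le_comap]
    intro a ha
    exact hle ha
  · -- InjOn
    intro y₁ hy₁ y₂ hy₂ heq
    rw [hmemC] at hy₁ hy₂
    have hcomap : Ideal.comap f y₁.asIdeal = Ideal.comap f y₂.asIdeal := by
      have := congrArg PrimeSpectrum.asIdeal heq
      simpa using this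
    -- pick t ∈ ker g with f t ∉ y₂ (hence f t ∉ y₁)
    obtain ⟨c₀, hc₀J, hc₀⟩ := SetLike.not_le_iff_exists.mp hy₂
    obtain ⟨t, ht0, htf⟩ := hlift c₀ hc₀J
    have ht2 : f t ∉ y₂.asIdeal := htf ▸ hc₀
    have ht1 : f t ∉ y₁.asIdeal := by
      intro h
      have h' : t ∈ Ideal.comap f y₁.asIdeal := h
      rw [hcomap] at h'
      exact ht2 h'
    have key : ∀ (y₁ y₂ : PrimeSpectrum C),
        Ideal.comap f y₁.asIdeal = Ideal.comap f y₂.asIdeal →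
        f t ∉ y₂.asIdeal → y₁.asIdeal ≤ y₂.asIdeal := by
      intro z₁ z₂ hz hft c hc
      obtain ⟨a, ha0, haf⟩ := hlift (f t * c) (by rw [map_mul, hker t ht0, zero_mul])
      have ha1 : a ∈ Ideal.comap f z₁.asIdeal := by
        rw [Ideal.mem_comap, haf]
        exact Ideal.mul_mem_left _ _ hc
      rw [hz, Ideal.mem_comap, haf] at ha1
      exact (z₂.isPrime.mem_or_mem ha1).resolve_left hft
    exact PrimeSpectrum.ext
      (le_antisymm (key y₁ y₂ hcomap ht2) (key y₂ y₁ hcomap.symm ht1))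
  · -- SurjOn
    intro x hx
    rw [hmemA] at hx
    obtain ⟨t, ht0, htp⟩ := SetLike.not_le_iff_exists.mp hx
    have ht0' : g t = 0 := ht0
    have hft : ∀ c : C, algebraMap C K (f t * c) = 0 := by
      intro c
      rw [map_mul, hker t ht0', zero_mul]
    -- the prime of C
    set Q : Ideal C :=
      { carrier := {c | ∃ a : A, g a = 0 ∧ f a = f t * c ∧ a ∈ x.asIdeal}
        zero_mem' := ⟨0, map_zero g, by rw [map_zero, mul_zero], zero_mem _⟩
        add_mem' := by
          rintro c d ⟨a, ha0, haf, hap⟩ ⟨b, hb0, hbf, hbp⟩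
          exact ⟨a + b, by rw [map_add, ha0, hb0, add_zero],
            by rw [map_add, haf, hbf, mul_add], add_mem hap hbp⟩
        smul_mem' := by
          rintro d c ⟨a, ha0, haf, hap⟩
          obtain ⟨a', ha'0, ha'f⟩ := hlift (f t * (d * c)) (hft _)
          obtain ⟨a'', ha''0, ha''f⟩ := hlift (f t * d) (hft _)
          refine ⟨a', ha'0, ha'f, ?_⟩
          have : t * a' = a * a'' := by
            apply hinj
            · rw [map_mul, map_mul, ha'0, ha0, mul_zero, zero_mul]
            · rw [map_mul, map_mul, ha'f, haf, ha''f]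
              ring
          have hmem : t * a' ∈ x.asIdeal := by
            rw [this]
            exact Ideal.mul_mem_right _ _ hap
          exact (x.isPrime.mem_or_mem hmem).resolve_left htp } with hQdef
    have hmemQ : ∀ c : C, c ∈ Q ↔ ∃ a : A, g a = 0 ∧ f a = f t * c ∧ a ∈ x.asIdeal :=
      fun c => Iff.rfl
    have hQprime : Q.IsPrime := by
      constructor
      · intro htop
        have h1 : (1 : C) ∈ Q := htop ▸ Submodule.mem_top
        obtain ⟨a, ha0, haf, hap⟩ := (hmemQ 1).mp h1
        have : a = t := hinj a t (by rw [ha0, ht0']) (by rw [haf, mul_one])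
        exact htp (this ▸ hap)
      · intro c d hcd
        obtain ⟨a, ha0, haf, hap⟩ := (hmemQ _).mp hcd
        obtain ⟨ac, hac0, hacf⟩ := hlift (f t * c) (hft _)
        obtain ⟨ad, had0, hadf⟩ := hlift (f t * d) (hft _)
        have : t * a = ac * ad := by
          apply hinj
          · rw [map_mul, map_mul, ha0, hac0, mul_zero, zero_mul]
          · rw [map_mul, map_mul, haf, hacf, hadf]
            ring
        have hmem : ac * ad ∈ x.asIdeal := by
          rw [← this]
          exact Ideal.mul_mem_left _ _ hap
        rcases x.isPrime.mem_or_mem hmem with h | h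
        · exact Or.inl ⟨ac, hac0, hacf, h⟩
        · exact Or.inr ⟨ad, had0, hadf, h⟩
    refine ⟨⟨Q, hQprime⟩, ?_, ?_⟩
    · -- Q avoids ker (C → K)
      rw [hmemC]
      intro hle
      have hftJ : f t ∈ RingHom.ker (algebraMap C K) := hker t ht0'
      obtain ⟨a, ha0, haf, hap⟩ := (hmemQ (f t)).mp (hle hftJ)
      have : a = t * t := by
        apply hinj
        · rw [ha0, map_mul, ht0', mul_zero]
        · rw [haf, map_mul]
      rw [this] at hap
      exact htp ((x.isPrime.mem_or_mem hap).elim id id)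
    · -- comap f Q = x
      apply PrimeSpectrum.ext
      show Ideal.comap f Q = x.asIdeal
      ext a
      rw [Ideal.mem_comap, hmemQ]
      constructor
      · rintro ⟨a', ha'0, ha'f, ha'p⟩
        have : a' = t * a := by
          apply hinj
          · rw [ha'0, map_mul, ht0', zero_mul]
          · rw [ha'f, map_mul]
        rw [this] at ha'p
        exact (x.isPrime.mem_or_mem ha'p).resolve_left htp
      · intro hap
        exact ⟨t * a, by rw [map_mul, ht0', zero_mul], by rw [map_mul],
          Ideal.mul_mem_left _ _ hap⟩
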